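/- Fix a finite set I of students, a finite set S of schools, schools' preferences, quotas, and a student acquaintance graph G of treewidth at most k. Then there exists a mechanism (a function assigning a feasible matching to every profile of students' strict linear orders on S ∪ {∅}) that is strategyproof and whose output matching is Pareto efficient and locally ERF-k for every profile of students' preferences. -/

import Mathlib

section Defs

variable {I S : Type*}

/-- Students' preference profiles: `pI i a b` means student `i` strictly prefers option `a`
to option `b`, where `none` represents being unmatched. -/
abbrev StudentPrefs (I S : Type*) := I → Option S → Option S → Prop

/-- Schools' preference profiles: `pS s a b` means school `s` strictly prefers `a` to `b`,
where `none` represents leaving a seat vacant. -/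
abbrev SchoolPrefs (I S : Type*) := S → Option I → Option I → Prop

/-- Each student's preference is a strict linear order on `S ∪ {∅}`. -/
def ValidStudentPrefs (pI : StudentPrefs I S) : Prop :=
  ∀ i, IsStrictTotalOrder (Option S) (pI i)

/-- Each school's preference is a strict linear order on `I ∪ {∅}`. -/
def ValidSchoolPrefs (pS : SchoolPrefs I S) : Prop :=
  ∀ s, IsStrictTotalOrder (Option I) (pS s)

/-- A matching `μ : I → Option S` is feasible if each school's quota is respected. -/
def Feasible (q : S → ℕ) (μ : I → Option S) : Prop :=
  ∀ s : S, {i | μ i = some s}.ncard ≤ q s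

/-- Student `i` has justified envy toward student `i'` in matching `μ`. -/
def JEnvy (pI : StudentPrefs I S) (pS : SchoolPrefs I S)
    (μ : I → Option S) (i i' : I) : Prop :=
  ∃ s : S, μ i' = some s ∧ pI i (some s) (μ i) ∧ pS s (some i) (some i')

/-- Local envy: justified envy toward a neighbor in the student acquaintance graph `G`. -/
def LocalEnvy (G : SimpleGraph I) (pI : StudentPrefs I S) (pS : SchoolPrefs I S)
    (μ : I → Option S) (i i' : I) : Prop :=
  JEnvy pI pS μ i i' ∧ G.Adj i i'

/-- Locally envy-free matching. -/
def LEF (G : SimpleGraph I) (pI : StudentPrefs I S) (pS : SchoolPrefs I S)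
    (μ : I → Option S) : Prop :=
  ∀ i i', ¬ LocalEnvy G pI pS μ i i'

/-- Fair (justified-envy-free) matching. -/
def Fair (pI : StudentPrefs I S) (pS : SchoolPrefs I S) (μ : I → Option S) : Prop :=
  ∀ i i', ¬ JEnvy pI pS μ i i'

/-- Locally envy-free up to `k` peers: every student has local envy toward at most `k` students. -/
def LocEF (G : SimpleGraph I) (pI : StudentPrefs I S) (pS : SchoolPrefs I S)
    (k : ℕ) (μ : I → Option S) : Prop :=
  ∀ i, {i' | LocalEnvy G pI pS μ i i'}.ncard ≤ k

/-- Locally envy-receiving-free up to `k` peers: for every student at most `k` students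
have local envy toward her. -/
def LocERF (G : SimpleGraph I) (pI : StudentPrefs I S) (pS : SchoolPrefs I S)
    (k : ℕ) (μ : I → Option S) : Prop :=
  ∀ i, {i' | LocalEnvy G pI pS μ i' i}.ncard ≤ k

/-- `μ'` Pareto dominates `μ`. -/
def Dominates (pI : StudentPrefs I S) (μ' μ : I → Option S) : Prop :=
  (∀ i, μ' i = μ i ∨ pI i (μ' i) (μ i)) ∧ (∃ i, pI i (μ' i) (μ i))

/-- A feasible matching is Pareto efficient if no feasible matching Pareto dominates it. -/
def ParetoEfficient (pI : StudentPrefs I S) (q : S → ℕ) (μ : I → Option S) : Prop :=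
  ∀ μ', Feasible q μ' → ¬ Dominates pI μ' μ

/-- `(i, s)` is a mutually-best pair. -/
def MBPair (pI : StudentPrefs I S) (pS : SchoolPrefs I S) (i : I) (s : S) : Prop :=
  (∀ x : Option S, x ≠ some s → pI i (some s) x) ∧
  (∀ y : Option I, y ≠ some i → pS s (some i) y)

/-- A matching is mutually-best if every mutually-best pair is matched. -/
def MutuallyBest (pI : StudentPrefs I S) (pS : SchoolPrefs I S) (μ : I → Option S) : Prop :=
  ∀ i s, MBPair pI pS i s → μ i = some s

/-- The set of the `m` most-preferred elements under a strict order `r`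
(`r j i` meaning `j` is strictly preferred to `i`). -/
def topSet (r : I → I → Prop) (m : ℕ) : Set I := {i | {j | r j i}.ncard < m}

/-- A strict linear order on `I` is single-peaked on the graph `G` if for each
`m ∈ {1, …, |I|}` the set of the `m` most-preferred elements induces a connected
subgraph of `G`. -/
def SinglePeakedOn (G : SimpleGraph I) (r : I → I → Prop) : Prop :=
  ∀ m : ℕ, 1 ≤ m → m ≤ Nat.card I → (G.induce (topSet r m)).Connected

/-- `(T, bag)` is a tree decomposition of `G`. -/
structure IsTreeDecomp {V : Type*} (G : SimpleGraph I) (T : SimpleGraph V)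
    (bag : V → Set I) : Prop where
  tree : T.IsTree
  covers : ∀ i : I, ∃ t, i ∈ bag t
  subtree : ∀ i : I, (T.induce {t | i ∈ bag t}).Connected
  edges : ∀ ⦃i i' : I⦄, G.Adj i i' → ∃ t, i ∈ bag t ∧ i' ∈ bag t

/-- `G` has treewidth at most `k`: it admits a tree decomposition of width at most `k`. -/
def TreewidthAtMost (G : SimpleGraph I) (k : ℕ) : Prop :=
  ∃ (V : Type) (T : SimpleGraph V) (bag : V → Set I),
    Finite V ∧ IsTreeDecomp G T bag ∧ ∀ t, (bag t).ncard ≤ k + 1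

/-- `G` is `k`-degenerate: there is a linear ordering of the vertices (an injection
into `ℕ`) such that every vertex has at most `k` neighbors occurring strictly later. -/
def Degenerate (G : SimpleGraph I) (k : ℕ) : Prop :=
  ∃ ord : I → ℕ, Function.Injective ord ∧
    ∀ i, {i' | G.Adj i i' ∧ ord i < ord i'}.ncard ≤ k

/-- The first index `j` in the list `L` of bags such that `i ∈ bag (L.get j)`. -/
noncomputable def firstBagIdx {V : Type*} (L : List V) (bag : V → Set I) (i : I) : ℕ :=
  sInf {j | ∃ h : j < L.length, i ∈ bag (L.get ⟨j, h⟩)}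

/-- A strict linear order on `I` is single-peaked on a tree decomposition `(T, bag)` if
there is a sequence of nodes covering all vertices, each node after the first adjacent in
`T` to an earlier one, such that vertices first covered earlier are preferred. -/
def SinglePeakedOnTD {V : Type*} (T : SimpleGraph V) (bag : V → Set I)
    (r : I → I → Prop) : Prop :=
  ∃ L : List V,
    (∀ i : I, ∃ j : ℕ, ∃ h : j < L.length, i ∈ bag (L.get ⟨j, h⟩)) ∧
    (∀ j : ℕ, ∀ h : j < L.length, 1 ≤ j →
      ∃ j' : ℕ, ∃ h' : j' < L.length, j' < j ∧ T.Adj (L.get ⟨j', h'⟩) (L.get ⟨j, h⟩)) ∧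
    (∀ i i' : I, firstBagIdx L bag i < firstBagIdx L bag i' → r i i')

/-- `(i, s)` is a blocking pair for the feasible matching `μ`. -/
def BlockingPair (pI : StudentPrefs I S) (pS : SchoolPrefs I S) (q : S → ℕ)
    (μ : I → Option S) (i : I) (s : S) : Prop :=
  μ i ≠ some s ∧ pI i (some s) (μ i) ∧
  (({i' | μ i' = some s}.ncard < q s ∧ pS s (some i) none) ∨
   ({i' | μ i' = some s}.ncard = q s ∧
     ∃ i₀, μ i₀ = some s ∧
       (∀ i₁, μ i₁ = some s → i₁ = i₀ ∨ pS s (some i₁) (some i₀)) ∧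
       pS s (some i) (some i₀)))

/-- A matching is locally stable if for every blocking pair `(i, s)`, no neighbor of `i`
is matched to `s`. -/
def LocallyStable (G : SimpleGraph I) (pI : StudentPrefs I S) (pS : SchoolPrefs I S)
    (q : S → ℕ) (μ : I → Option S) : Prop :=
  ∀ i s, BlockingPair pI pS q μ i s → ∀ i', G.Adj i i' → μ i' ≠ some s

/-- Strategyproofness of a mechanism `f` (the schools' side being fixed). -/
def Strategyproof (f : StudentPrefs I S → (I → Option S)) : Prop :=
  ∀ pI : StudentPrefs I S, ValidStudentPrefs pI → ∀ i : I,
    ∀ pI' : StudentPrefs I S, ValidStudentPrefs pI' →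
      (∀ i'' : I, i'' ≠ i → pI' i'' = pI i'') →
      f pI i = f pI' i ∨ pI i (f pI i) (f pI' i)

end Defs

/- ---------------------------------------------------------------------------
Auxiliary material for the proof.
--------------------------------------------------------------------------- -/

open SimpleGraph Classical

noncomputable local instance (priority := low) auxDecEq {V : Type*} : DecidableEq V :=
  Classical.decEq V

section TreeLemmas

variable {V : Type*} {T : SimpleGraph V}

lemma aux_tree_path_length (hT : T.IsTree) {a b : V} (p : T.Walk a b) (hp : p.IsPath) :
    p.length = T.dist a b := by
  obtain ⟨w, hw⟩ := hT.isConnected.exists_walk_length_eq_dist a b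
  have hpe : p = w.bypass :=
    congrArg Subtype.val (hT.IsAcyclic.path_unique ⟨p, hp⟩ ⟨w.bypass, w.bypass_isPath⟩)
  refine le_antisymm ?_ (SimpleGraph.dist_le p)
  calc p.length = w.bypass.length := by rw [hpe]
    _ ≤ w.length := w.length_bypass_le
    _ = T.dist a b := hw

lemma aux_tree_path_dist_le (hT : T.IsTree) {a b x : V} (p : T.Walk a b) (hp : p.IsPath)
    (hx : x ∈ p.support) :
    T.dist a x ≤ T.dist a b ∧ (T.dist a x = T.dist a b → x = b) := by
  have hsplit := p.take_spec hx
  have hlen : (p.takeUntil x hx).length + (p.dropUntil x hx).length = p.length := by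
    rw [← Walk.length_append, hsplit]
  have h1 : (p.takeUntil x hx).length = T.dist a x :=
    aux_tree_path_length hT _ (hp.takeUntil hx)
  have h2 : (p.dropUntil x hx).length = T.dist x b :=
    aux_tree_path_length hT _ (hp.dropUntil hx)
  have h3 : p.length = T.dist a b := aux_tree_path_length hT p hp
  refine ⟨by omega, fun he => ?_⟩
  exact Walk.eq_of_length_eq_zero (p := p.dropUntil x hx) (by omega)

lemma aux_exists_path_in (C : Set V) (h : (T.induce C).Connected)
    {t1 t2 : V} (h1 : t1 ∈ C) (h2 : t2 ∈ C) :
    ∃ p : T.Walk t1 t2, p.IsPath ∧ ∀ x ∈ p.support, x ∈ C := by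
  obtain ⟨w⟩ := h.preconnected ⟨t1, h1⟩ ⟨t2, h2⟩
  let φ : T.induce C →g T := ⟨Subtype.val, fun {x y} hxy => hxy⟩
  let w' : T.Walk t1 t2 := w.map φ
  refine ⟨w'.bypass, w'.bypass_isPath, fun x hxs => ?_⟩
  have := w'.support_bypass_subset hxs
  rw [Walk.support_map] at this
  obtain ⟨y, _, rfl⟩ := List.mem_map.mp this
  exact y.2

lemma aux_isPath_append {u v w : V} {p : T.Walk u v} {q : T.Walk v w}
    (hp : p.IsPath) (hq : q.IsPath)
    (h : ∀ x ∈ p.support, x ∈ q.support → x = v) : (p.append q).IsPath := by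
  rw [Walk.isPath_def, Walk.support_append]
  refine List.Nodup.append (((Walk.isPath_def _).mp hp)) ?_ ?_
  · have := ((Walk.isPath_def _).mp hq)
    rw [q.support_eq_cons] at this
    exact this.of_cons
  · intro x hxp hxt
    have hxq : x ∈ q.support := by
      rw [q.support_eq_cons]; exact List.mem_cons_of_mem _ hxt
    have hxv : x = v := h x hxp hxq
    subst hxv
    have := ((Walk.isPath_def _).mp hq)
    rw [q.support_eq_cons] at this
    exact (List.nodup_cons.mp this).1 hxt

end TreeLemmas

lemma aux_tw_to_degenerate {I : Type*} [Fintype I] [Nonempty I] (G : SimpleGraph I) (k : ℕ)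
    (hG : TreewidthAtMost G k) : Degenerate G k := by
  classical
  obtain ⟨V, T, bag, hfinV, hdec, hsize⟩ := hG
  have hT := hdec.tree
  obtain ⟨i₀⟩ := ‹Nonempty I›
  obtain ⟨r, -⟩ := hdec.covers i₀
  set C : I → Set V := fun i => {t | i ∈ bag t} with hC
  have hne : ∀ i, (T.dist r '' C i).Nonempty := fun i => by
    obtain ⟨t, ht⟩ := hdec.covers i; exact ⟨_, ⟨t, ht, rfl⟩⟩
  set d : I → ℕ := fun i => sInf (T.dist r '' C i) with hd
  have hmem : ∀ i, ∃ t, t ∈ C i ∧ T.dist r t = d i := fun i => Nat.sInf_mem (hne i)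
  choose u hu hud using hmem
  have hmin : ∀ i, ∀ t ∈ C i, d i ≤ T.dist r t := fun i t ht => Nat.sInf_le ⟨t, ht, rfl⟩
  have hcross : ∀ (j : I) (Pj : T.Walk r (u j)), Pj.IsPath →
      ∀ x ∈ Pj.support, x ∈ C j → x = u j := by
    intro j Pj hPj x hx hxC
    have h2 := aux_tree_path_dist_le hT Pj hPj hx
    have heq : T.dist r x = T.dist r (u j) := by
      have := hmin j x hxC
      rw [hud j] at *
      omega
    exact h2.2 heq
  have key : ∀ i i', G.Adj i i' → d i' ≤ d i → u i ∈ C i' := by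
    intro i i' hadj hle
    obtain ⟨b, hbi, hbi'⟩ := hdec.edges hadj
    obtain ⟨w0⟩ := hT.isConnected.preconnected r (u i')
    obtain ⟨w1⟩ := hT.isConnected.preconnected r (u i)
    have hP0 : w0.bypass.IsPath := w0.bypass_isPath
    have hP1 : w1.bypass.IsPath := w1.bypass_isPath
    obtain ⟨Q', hQ'p, hQ'C⟩ := aux_exists_path_in (C i') (hdec.subtree i') (hu i') hbi'
    obtain ⟨Q, hQp, hQC⟩ := aux_exists_path_in (C i) (hdec.subtree i) (hu i) hbi
    have hW' : (w0.bypass.append Q').IsPath :=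
      aux_isPath_append hP0 hQ'p (fun x hx hxq => hcross i' _ hP0 x hx (hQ'C x hxq))
    have hW : (w1.bypass.append Q).IsPath :=
      aux_isPath_append hP1 hQp (fun x hx hxq => hcross i _ hP1 x hx (hQC x hxq))
    have hWeq : w1.bypass.append Q = w0.bypass.append Q' :=
      congrArg Subtype.val (hT.IsAcyclic.path_unique ⟨_, hW⟩ ⟨_, hW'⟩)
    have hui : u i ∈ (w0.bypass.append Q').support := by
      rw [← hWeq]
      exact Walk.subset_support_append_left _ _ (Walk.end_mem_support w1.bypass)
    rw [Walk.mem_support_append_iff] at hui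
    rcases hui with h0 | h1
    · have h2 := aux_tree_path_dist_le hT _ hP0 h0
      have heq : u i = u i' := by
        apply h2.2
        have h1 := h2.1
        rw [hud i, hud i'] at *
        omega
      rw [heq]; exact hu i'
    · exact hQ'C _ h1
  set n := Fintype.card I with hn
  have hnpos : 0 < n := Fintype.card_pos
  set eI := Fintype.equivFin I with heI
  set D := Finset.univ.sup d with hD
  have hdD : ∀ i, d i ≤ D := fun i => Finset.le_sup (Finset.mem_univ i)
  refine ⟨fun i => (D - d i) * n + (eI i).val, ?_, ?_⟩
  · intro a b hab
    dsimp only at hab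
    have hmod : ∀ c : I, ((D - d c) * n + (eI c).val) % n = (eI c).val := by
      intro c
      rw [add_comm, Nat.add_mul_mod_self_right]
      exact Nat.mod_eq_of_lt (eI c).isLt
    have : (eI a).val = (eI b).val := by
      rw [← hmod a, ← hmod b, hab]
    exact eI.injective (Fin.val_injective this)
  · intro i
    have hsub : {i' | G.Adj i i' ∧ (D - d i) * n + (eI i).val < (D - d i') * n + (eI i').val}
        ⊆ bag (u i) \ {i} := by
      rintro i' ⟨hadj, hlt⟩
      have hdle : d i' ≤ d i := by
        by_contra hgt
        push_neg at hgt
        have h1 : D - d i' + 1 ≤ D - d i := by have := hdD i'; omega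
        have h2 : (D - d i') * n + (eI i').val < (D - d i) * n + (eI i).val := by
          calc (D - d i') * n + (eI i').val < (D - d i' + 1) * n := by
                have := (eI i').isLt; rw [Nat.add_mul]; omega
            _ ≤ (D - d i) * n := Nat.mul_le_mul_right n h1
            _ ≤ _ := Nat.le_add_right _ _
        omega
      refine ⟨key i i' hadj hdle, ?_⟩
      simp only [Set.mem_singleton_iff]
      exact (G.ne_of_adj hadj).symm
    calc {i' | G.Adj i i' ∧ (D - d i) * n + (eI i).val < (D - d i') * n + (eI i').val}.ncard
        ≤ (bag (u i) \ {i}).ncard := Set.ncard_le_ncard hsub (Set.toFinite _)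
      _ = (bag (u i)).ncard - 1 := Set.ncard_diff_singleton_of_mem (s := bag (u i)) (a := i) (hu i)
      _ ≤ k := by have := hsize (u i); omega

/- ----------------------- Serial dictatorship ----------------------- -/

section SD

variable {I S : Type*}

lemma aux_exists_rmax {α : Type*} (r : α → α → Prop)
    (htri : ∀ a b : α, a ≠ b → r a b ∨ r b a) (htr : ∀ a b c : α, r a b → r b c → r a c) :
    ∀ A : Finset α, A.Nonempty → ∃ x ∈ A, ∀ y ∈ A, y ≠ x → r x y := by
  classical
  intro A
  induction A using Finset.induction_on with
  | empty => rintro ⟨x, hx⟩; simp at hx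
  | @insert a A' ha ih =>
    intro _
    by_cases hA' : A'.Nonempty
    · obtain ⟨x, hx, hmax⟩ := ih hA'
      have hax : a ≠ x := fun h => ha (h ▸ hx)
      rcases htri a x hax with h | h
      · refine ⟨a, Finset.mem_insert_self _ _, fun y hy hne => ?_⟩
        rcases Finset.mem_insert.mp hy with rfl | hy'
        · exact absurd rfl hne
        · rcases eq_or_ne y x with rfl | hyx
          · exact h
          · exact htr _ _ _ h (hmax y hy' hyx)
      · refine ⟨x, Finset.mem_insert_of_mem hx, fun y hy hne => ?_⟩
        rcases Finset.mem_insert.mp hy with rfl | hy'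
        · exact h
        · exact hmax y hy' hne
    · rw [Finset.not_nonempty_iff_eq_empty] at hA'
      subst hA'
      refine ⟨a, Finset.mem_insert_self _ _, fun y hy hne => ?_⟩
      rcases Finset.mem_insert.mp hy with rfl | hy'
      · exact absurd rfl hne
      · simp at hy'

noncomputable def pickMax {S : Type*} (r : Option S → Option S → Prop)
    (A : Set (Option S)) : Option S :=
  Classical.epsilon fun x => x ∈ A ∧ ∀ y ∈ A, y ≠ x → r x y

def availAt (q : S → ℕ) (ord : I → ℕ) (μ : I → Option S) (m : ℕ) : Set (Option S) :=
  {x | ∀ s : S, x = some s → {i' | ord i' < m ∧ μ i' = some s}.ncard < q s}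

lemma availAt_congr {q : S → ℕ} {ord : I → ℕ} {μ μ' : I → Option S} {m : ℕ}
    (h : ∀ i, ord i < m → μ i = μ' i) : availAt q ord μ m = availAt q ord μ' m := by
  have hs : ∀ s : S, {i' | ord i' < m ∧ μ i' = some s} = {i' | ord i' < m ∧ μ' i' = some s} := by
    intro s
    ext j
    simp only [Set.mem_setOf_eq]
    constructor
    · rintro ⟨h1, h2⟩; exact ⟨h1, by rw [← h j h1]; exact h2⟩
    · rintro ⟨h1, h2⟩; exact ⟨h1, by rw [h j h1]; exact h2⟩
  unfold availAt
  ext x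
  simp only [Set.mem_setOf_eq]
  constructor
  · intro hx s hxs; rw [← hs s]; exact hx s hxs
  · intro hx s hxs; rw [hs s]; exact hx s hxs

noncomputable def sdP (pI : StudentPrefs I S) (q : S → ℕ) (ord : I → ℕ) : ℕ → I → Option S
  | 0 => fun _ => none
  | m + 1 => fun i =>
      if ord i = m then pickMax (pI i) (availAt q ord (sdP pI q ord m) m)
      else sdP pI q ord m i

noncomputable def sd (pI : StudentPrefs I S) (q : S → ℕ) (ord : I → ℕ) (i : I) : Option S :=
  sdP pI q ord (ord i + 1) i

lemma sdP_stable (pI : StudentPrefs I S) (q : S → ℕ) (ord : I → ℕ) (i : I) :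
    ∀ m : ℕ, ord i < m → sdP pI q ord m i = sd pI q ord i := by
  intro m
  induction m with
  | zero => omega
  | succ m ih =>
    intro hm
    rcases Nat.lt_succ_iff_lt_or_eq.mp hm with h | h
    · have hne : ord i ≠ m := Nat.ne_of_lt h
      show (if ord i = m then _ else sdP pI q ord m i) = _
      rw [if_neg hne]
      exact ih h
    · subst h
      rfl

lemma sd_eq (pI : StudentPrefs I S) (q : S → ℕ) (ord : I → ℕ) (i : I) :
    sd pI q ord i = pickMax (pI i) (availAt q ord (sd pI q ord) (ord i)) := by
  show (if ord i = ord i then pickMax (pI i) (availAt q ord (sdP pI q ord (ord i)) (ord i))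
      else _) = _
  rw [if_pos rfl]
  congr 1
  exact availAt_congr (fun j hj => sdP_stable pI q ord j (ord i) hj)

lemma sd_spec (pI : StudentPrefs I S) [Fintype S] (hval : ValidStudentPrefs pI)
    (q : S → ℕ) (ord : I → ℕ) (i : I) :
    sd pI q ord i ∈ availAt q ord (sd pI q ord) (ord i) ∧
    ∀ y ∈ availAt q ord (sd pI q ord) (ord i), y ≠ sd pI q ord i → pI i (sd pI q ord i) y := by
  classical
  set A := availAt q ord (sd pI q ord) (ord i) with hA
  have hnone : (none : Option S) ∈ A := by
    intro s hs; exact absurd hs (by simp)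
  have hAfin : A.Finite := Set.toFinite _
  have htri : ∀ a b : Option S, a ≠ b → pI i a b ∨ pI i b a := by
    intro a b hab
    haveI := hval i
    rcases trichotomous_of (pI i) a b with h | h | h
    · exact Or.inl h
    · exact absurd h hab
    · exact Or.inr h
  have htr : ∀ a b c : Option S, pI i a b → pI i b c → pI i a c :=
    fun a b c => (hval i).trans a b c
  obtain ⟨x, hx, hmax⟩ := aux_exists_rmax (pI i) htri htr hAfin.toFinset
    ⟨none, hAfin.mem_toFinset.mpr hnone⟩
  have hex : ∃ x : Option S, x ∈ A ∧ ∀ y ∈ A, y ≠ x → pI i x y :=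
    ⟨x, hAfin.mem_toFinset.mp hx, fun y hy hne => hmax y (hAfin.mem_toFinset.mpr hy) hne⟩
  have hspec := Classical.epsilon_spec hex
  rw [sd_eq]
  exact ⟨hspec.1, hspec.2⟩

lemma sd_feasible [Fintype I] [Fintype S] (pI : StudentPrefs I S)
    (hval : ValidStudentPrefs pI) (q : S → ℕ) (ord : I → ℕ) (hinj : Function.Injective ord) :
    Feasible q (sd pI q ord) := by
  intro s
  have main : ∀ m : ℕ, {i | ord i < m ∧ sd pI q ord i = some s}.ncard ≤ q s := by
    intro m
    induction m with
    | zero =>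
      have : {i | ord i < 0 ∧ sd pI q ord i = some s} = ∅ := by ext j; simp
      rw [this, Set.ncard_empty]
      exact Nat.zero_le _
    | succ m ih =>
      by_cases hex : ∃ i, ord i = m ∧ sd pI q ord i = some s
      · obtain ⟨i₀, hi₀, hs₀⟩ := hex
        have hlt : {i | ord i < m ∧ sd pI q ord i = some s}.ncard < q s := by
          have := (sd_spec pI hval q ord i₀).1 s hs₀
          rwa [hi₀] at this
        have hsub : {i | ord i < m + 1 ∧ sd pI q ord i = some s}
            ⊆ insert i₀ {i | ord i < m ∧ sd pI q ord i = some s} := by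
          rintro j ⟨hj1, hj2⟩
          rcases Nat.lt_succ_iff_lt_or_eq.mp hj1 with h | h
          · exact Set.mem_insert_of_mem _ ⟨h, hj2⟩
          · have : j = i₀ := hinj (h.trans hi₀.symm)
            exact this ▸ Set.mem_insert _ _
        calc {i | ord i < m + 1 ∧ sd pI q ord i = some s}.ncard
            ≤ (insert i₀ {i | ord i < m ∧ sd pI q ord i = some s}).ncard :=
              Set.ncard_le_ncard hsub (Set.toFinite _)
          _ ≤ {i | ord i < m ∧ sd pI q ord i = some s}.ncard + 1 := Set.ncard_insert_le _ _
          _ ≤ q s := by omega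
      · have heq : {i | ord i < m + 1 ∧ sd pI q ord i = some s}
            = {i | ord i < m ∧ sd pI q ord i = some s} := by
          ext j
          simp only [Set.mem_setOf_eq]
          constructor
          · rintro ⟨hj1, hj2⟩
            rcases Nat.lt_succ_iff_lt_or_eq.mp hj1 with h | h
            · exact ⟨h, hj2⟩
            · exact absurd ⟨h, hj2⟩ (not_exists.mp hex j)
          · rintro ⟨hj1, hj2⟩; exact ⟨by omega, hj2⟩
        rw [heq]; exact ih
  have hcover : {i | sd pI q ord i = some s}
      = {i | ord i < Finset.univ.sup ord + 1 ∧ sd pI q ord i = some s} := by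
    ext j
    simp only [Set.mem_setOf_eq]
    constructor
    · intro h
      exact ⟨Nat.lt_succ_of_le (Finset.le_sup (Finset.mem_univ j)), h⟩
    · rintro ⟨-, h⟩; exact h
  rw [hcover]
  exact main _

lemma sd_sp [Fintype S] (pI pI' : StudentPrefs I S)
    (hval : ValidStudentPrefs pI) (hval' : ValidStudentPrefs pI')
    (q : S → ℕ) (ord : I → ℕ) (i : I) (hag : ∀ j : I, j ≠ i → pI' j = pI j) :
    sd pI q ord i = sd pI' q ord i ∨ pI i (sd pI q ord i) (sd pI' q ord i) := by
  have key : ∀ m : ℕ, m ≤ ord i → ∀ j, ord j < m → sd pI q ord j = sd pI' q ord j := by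
    intro m
    induction m with
    | zero => intro _ j hj; omega
    | succ m ih =>
      intro hm j hj
      rcases Nat.lt_succ_iff_lt_or_eq.mp hj with h | h
      · exact ih (by omega) j h
      · have hne : j ≠ i := by
          intro hji; subst hji; omega
        rw [sd_eq pI q ord j, sd_eq pI' q ord j, hag j hne]
        congr 1
        exact availAt_congr (fun j' hj' => ih (by omega) j' (h ▸ hj'))
  have hAeq : availAt q ord (sd pI q ord) (ord i) = availAt q ord (sd pI' q ord) (ord i) :=
    availAt_congr (fun j hj => key (ord i) le_rfl j hj)
  have spec := sd_spec pI hval q ord i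
  have spec' := sd_spec pI' hval' q ord i
  rcases eq_or_ne (sd pI q ord i) (sd pI' q ord i) with h | h
  · exact Or.inl h
  · refine Or.inr (spec.2 _ ?_ (Ne.symm h))
    rw [hAeq]
    exact spec'.1

lemma sd_pe [Fintype I] [Fintype S] (pI : StudentPrefs I S)
    (hval : ValidStudentPrefs pI) (q : S → ℕ) (ord : I → ℕ) :
    ParetoEfficient pI q (sd pI q ord) := by
  classical
  intro μ' hfeas hdom
  obtain ⟨hweak, j₁, hj₁⟩ := hdom
  have hirr : ∀ (j : I) (x : Option S), ¬ pI j x x := by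
    intro j x
    exact (hval j).irrefl x
  have hPne : (ord '' {i | μ' i ≠ sd pI q ord i}).Nonempty := by
    refine ⟨ord j₁, j₁, ?_, rfl⟩
    intro h
    rw [h] at hj₁
    exact hirr j₁ _ hj₁
  obtain ⟨i, hiP, hio⟩ := Nat.sInf_mem hPne
  have hagree : ∀ j, ord j < ord i → μ' j = sd pI q ord j := by
    intro j hj
    by_contra hne
    have hjm : ord j ∈ ord '' {i | μ' i ≠ sd pI q ord i} := Set.mem_image_of_mem _ hne
    have := Nat.sInf_le hjm
    omega
  have hpref : pI i (μ' i) (sd pI q ord i) := (hweak i).resolve_left hiP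
  have spec := sd_spec pI hval q ord i
  have hnot : μ' i ∉ availAt q ord (sd pI q ord) (ord i) := by
    intro hmem
    have h2 := spec.2 _ hmem hiP
    exact hirr i _ ((hval i).trans _ _ _ hpref h2)
  simp only [availAt, Set.mem_setOf_eq, not_forall] at hnot
  obtain ⟨s, hs, hge⟩ := hnot
  push_neg at hge
  have hsetEq : {j | ord j < ord i ∧ sd pI q ord j = some s}
      = {j | ord j < ord i ∧ μ' j = some s} := by
    ext j
    simp only [Set.mem_setOf_eq]
    constructor
    · rintro ⟨h1, h2⟩; exact ⟨h1, by rw [hagree j h1]; exact h2⟩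
    · rintro ⟨h1, h2⟩; exact ⟨h1, by rw [← hagree j h1]; exact h2⟩
  have hni : i ∉ {j | ord j < ord i ∧ μ' j = some s} := by
    rintro ⟨h, -⟩; omega
  have hsub : insert i {j | ord j < ord i ∧ μ' j = some s} ⊆ {j | μ' j = some s} := by
    rintro j hj
    rcases Set.mem_insert_iff.mp hj with rfl | ⟨-, hj2⟩
    · exact hs
    · exact hj2
  have hcard : q s + 1 ≤ {j | μ' j = some s}.ncard := by
    calc q s + 1 ≤ {j | ord j < ord i ∧ μ' j = some s}.ncard + 1 := by
          rw [← hsetEq]; omega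
      _ = (insert i {j | ord j < ord i ∧ μ' j = some s}).ncard :=
          (Set.ncard_insert_of_notMem hni (Set.toFinite _)).symm
      _ ≤ _ := Set.ncard_le_ncard hsub (Set.toFinite _)
  have := hfeas s
  omega

lemma sd_erf [Fintype I] [Fintype S] (G : SimpleGraph I) (pI : StudentPrefs I S)
    (pS : SchoolPrefs I S) (hval : ValidStudentPrefs pI) (q : S → ℕ) (ord : I → ℕ) (k : ℕ)
    (hinj : Function.Injective ord)
    (hdeg : ∀ i, {i' | G.Adj i i' ∧ ord i < ord i'}.ncard ≤ k) :
    LocERF G pI pS k (sd pI q ord) := by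
  intro i
  refine le_trans (Set.ncard_le_ncard ?_ (Set.toFinite _)) (hdeg i)
  rintro i' ⟨⟨s, hsi, hpref, -⟩, hadj⟩
  refine ⟨hadj.symm, ?_⟩
  have hne : i' ≠ i := G.ne_of_adj hadj
  by_contra hle
  push_neg at hle
  have hlt : ord i' < ord i := lt_of_le_of_ne hle (fun h => hne (hinj h))
  have spec_i := sd_spec pI hval q ord i
  have h1 : {j | ord j < ord i ∧ sd pI q ord j = some s}.ncard < q s := spec_i.1 s hsi
  have hsub2 : {j | ord j < ord i' ∧ sd pI q ord j = some s}
      ⊆ {j | ord j < ord i ∧ sd pI q ord j = some s} := by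
    rintro j ⟨hj1, hj2⟩; exact ⟨by omega, hj2⟩
  have h2 : (some s : Option S) ∈ availAt q ord (sd pI q ord) (ord i') := by
    intro s' hs'
    have : s = s' := Option.some_injective _ hs'
    subst this
    exact lt_of_le_of_lt (Set.ncard_le_ncard hsub2 (Set.toFinite _)) h1
  have spec_i' := sd_spec pI hval q ord i'
  rcases eq_or_ne (some s) (sd pI q ord i') with h | h
  · rw [← h] at hpref
    exact (hval i').irrefl _ hpref
  · have h3 := spec_i'.2 _ h2 h
    exact (hval i').irrefl _ ((hval i').trans _ _ _ hpref h3)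

end SD
/-- for any fixed schools' preferences, quotas, and acquaintance graph of
treewidth at most `k`, there exists a strategyproof mechanism whose output matching is
always feasible, Pareto efficient, and locally ERF-k. -/
theorem sp_pe_locerf_mechanism_treewidth {I S : Type*} [Fintype I] [Fintype S] [Nonempty I]
    (k : ℕ) (G : SimpleGraph I) (hG : TreewidthAtMost G k)
    (pS : SchoolPrefs I S) (q : S → ℕ) (hpS : ValidSchoolPrefs pS) :
    ∃ f : StudentPrefs I S → (I → Option S),
      (∀ pI, ValidStudentPrefs pI → Feasible q (f pI)) ∧
      Strategyproof f ∧
      ∀ pI, ValidStudentPrefs pI →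
        ParetoEfficient pI q (f pI) ∧ LocERF G pI pS k (f pI) := by
  classical
  obtain ⟨ord, hinj, hdeg⟩ := aux_tw_to_degenerate G k hG
  refine ⟨fun pI => if h : ValidStudentPrefs pI then sd pI q ord else fun _ => none,
    ?_, ?_, ?_⟩
  · intro pI hv
    simp only [dif_pos hv]
    exact sd_feasible pI hv q ord hinj
  · intro pI hv i pI' hv' hag
    simp only [dif_pos hv, dif_pos hv']
    exact sd_sp pI pI' hv hv' q ord i hag
  · intro pI hv
    simp only [dif_pos hv]
    exact ⟨sd_pe pI hv q ord, sd_erf G pI pS hv q ord k hinj hdeg⟩
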